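/- Under the same coefficient system with μ ≥ 1, one has a₃ = (1−β)/(2(2λ+μ+6ξδ)) · [((3+μ+24δ/(2λ+1))/(1+μ+12δ/(2λ+1))) p₂ + ((1−μ)/(1+μ+12δ/(2λ+1))) q₂], and consequently |a₃| ≤ 2(1−β)/(2λ+μ+6ξδ). -/

import Mathlib

set_option maxHeartbeats 1600000

open Complex

theorem a3_formula_and_bound_mu_ge_one
    (a₂ a₃ p₂ q₂ : ℂ) (beta lam mu del xi : ℝ)
    (hbeta : 0 ≤ beta ∧ beta < 1) (hlam : 1 ≤ lam) (hmu : 1 ≤ mu) (hdel : 0 ≤ del)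
    (hxi : xi = (2 * lam + mu) / (2 * lam + 1))
    (h2 : (2 * (lam : ℂ) + mu) * (((mu : ℂ) - 1) / 2 * a₂ ^ 2
            + (1 + 6 * (del : ℂ) / (2 * lam + 1)) * a₃) = (1 - (beta : ℂ)) * p₂)
    (h4 : (2 * (lam : ℂ) + mu) * ((((mu : ℂ) + 3) / 2 + 12 * (del : ℂ) / (2 * lam + 1)) * a₂ ^ 2
            - (1 + 6 * (del : ℂ) / (2 * lam + 1)) * a₃) = (1 - (beta : ℂ)) * q₂)
    (hp₂ : ‖p₂‖ ≤ 2) (hq₂ : ‖q₂‖ ≤ 2) :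
    a₃ = (1 - (beta : ℂ)) / (2 * (2 * (lam : ℂ) + mu + 6 * xi * del))
        * (((3 + (mu : ℂ) + 24 * (del : ℂ) / (2 * lam + 1))
              / (1 + (mu : ℂ) + 12 * (del : ℂ) / (2 * lam + 1))) * p₂
          + ((1 - (mu : ℂ)) / (1 + (mu : ℂ) + 12 * (del : ℂ) / (2 * lam + 1))) * q₂) ∧
    ‖a₃‖ ≤ 2 * (1 - beta) / (2 * lam + mu + 6 * xi * del) := by
  obtain ⟨hb0, hb1⟩ := hbeta
  have hl1 : (0:ℝ) < 2 * lam + 1 := by linarith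
  have hA : (0:ℝ) < 2 * lam + mu := by linarith
  have hBr : (0:ℝ) < 2 * lam + 1 + 6 * del := by linarith
  have hSr : (0:ℝ) < (mu + 1) * (2 * lam + 1) + 12 * del := by nlinarith
  subst hxi
  have habs : ∀ r : ℝ, 0 ≤ r → ‖(r:ℂ)‖ = r := fun r hr => by
    rw [Complex.norm_real, Real.norm_eq_abs, _root_.abs_of_nonneg hr]
  have hne1 : (2 * (lam:ℂ) + 1) ≠ 0 := by
    rw [show 2 * (lam:ℂ) + 1 = ((2 * lam + 1 : ℝ) : ℂ) by push_cast; ring]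
    exact_mod_cast hl1.ne'
  have hne2 : (2 * (lam:ℂ) + mu) ≠ 0 := by
    rw [show 2 * (lam:ℂ) + mu = ((2 * lam + mu : ℝ) : ℂ) by push_cast; ring]
    exact_mod_cast hA.ne'
  have hne3 : (2 * (lam:ℂ) + 1 + 6 * del) ≠ 0 := by
    rw [show 2 * (lam:ℂ) + 1 + 6 * del = ((2 * lam + 1 + 6 * del : ℝ) : ℂ) by push_cast; ring]
    exact_mod_cast hBr.ne'
  have hne4 : (((mu:ℂ) + 1) * (2 * lam + 1) + 12 * del) ≠ 0 := by
    rw [show ((mu:ℂ) + 1) * (2 * (lam:ℂ) + 1) + 12 * del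
        = (((mu + 1) * (2 * lam + 1) + 12 * del : ℝ) : ℂ) by push_cast; ring]
    exact_mod_cast hSr.ne'
  field_simp at h2 h4
  have key : (2 * (lam:ℂ) + mu) * (2 * lam + 1 + 6 * del)
        * (((mu:ℂ) + 1) * (2 * lam + 1) + 12 * del) * a₃ * 2
      = (1 - (beta:ℂ)) * ((((mu:ℂ) + 3) * (2 * lam + 1) + 24 * del) * p₂
          - ((mu:ℂ) - 1) * (2 * lam + 1) * q₂) * (2 * lam + 1) := by
    linear_combination (((mu:ℂ) + 3) * (2 * lam + 1) + 24 * del) / 2 * h2 - ((mu:ℂ) - 1) * (2 * lam + 1) / 2 * h4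
  have hKc : ((2 * (lam:ℂ) + mu) * (2 * lam + 1 + 6 * del)
      * (((mu:ℂ) + 1) * (2 * lam + 1) + 12 * del) * 2) ≠ 0 :=
    mul_ne_zero (mul_ne_zero (mul_ne_zero hne2 hne3) hne4) two_ne_zero
  have ha3 : a₃ = (1 - (beta:ℂ)) * ((((mu:ℂ) + 3) * (2 * lam + 1) + 24 * del) * p₂
          - ((mu:ℂ) - 1) * (2 * lam + 1) * q₂) * (2 * lam + 1)
        / ((2 * (lam:ℂ) + mu) * (2 * lam + 1 + 6 * del)
          * (((mu:ℂ) + 1) * (2 * lam + 1) + 12 * del) * 2) := by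
    rw [eq_div_iff hKc]; linear_combination key
  constructor
  · rw [show 1 + (mu:ℂ) + 12 * (del:ℂ) / (2 * (lam:ℂ) + 1)
        = (((mu:ℂ) + 1) * (2 * lam + 1) + 12 * del) / (2 * (lam:ℂ) + 1) by
      field_simp; ring]
    rw [show 3 + (mu:ℂ) + 24 * (del:ℂ) / (2 * (lam:ℂ) + 1)
        = (((mu:ℂ) + 3) * (2 * lam + 1) + 24 * del) / (2 * (lam:ℂ) + 1) by
      field_simp; ring]
    rw [show 2 * (2 * (lam:ℂ) + mu + 6 * (((2 * lam + mu) / (2 * lam + 1) : ℝ) : ℂ) * del)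
        = (2 * (lam:ℂ) + mu) * (2 * (lam:ℂ) + 1 + 6 * del) * 2 / (2 * (lam:ℂ) + 1) by
      push_cast; field_simp]
    rw [ha3]
    field_simp
    ring
  · -- bound
    set W : ℂ := (((mu:ℂ) + 3) * (2 * lam + 1) + 24 * del) * p₂
        - ((mu:ℂ) - 1) * (2 * lam + 1) * q₂ with hWdef
    set K : ℝ := (2 * lam + mu) * (2 * lam + 1 + 6 * del) * ((mu + 1) * (2 * lam + 1) + 12 * del) * 2
      with hKdef
    have hK : (0:ℝ) < K := by rw [hKdef]; positivity
    have key2 : ((K : ℝ) : ℂ) * a₃ = (((1 - beta) * (2 * lam + 1) : ℝ) : ℂ) * W := by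
      rw [hKdef, hWdef]; push_cast; linear_combination key
    have hb' : (0:ℝ) ≤ 1 - beta := by linarith
    have hKnorm : K * ‖a₃‖ = (1 - beta) * (2 * lam + 1) * ‖W‖ := by
      have h := congrArg norm key2
      rwa [norm_mul, norm_mul, habs _ hK.le, habs _ (by positivity)] at h
    have hM : ‖W‖ ≤ ((mu + 3) * (2 * lam + 1) + 24 * del) * 2 + (mu - 1) * (2 * lam + 1) * 2 := by
      calc ‖W‖ ≤ ‖(((mu:ℂ) + 3) * (2 * lam + 1) + 24 * del) * p₂‖
            + ‖((mu:ℂ) - 1) * (2 * lam + 1) * q₂‖ := norm_sub_le _ _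
        _ ≤ ((mu + 3) * (2 * lam + 1) + 24 * del) * 2 + (mu - 1) * (2 * lam + 1) * 2 := by
            rw [norm_mul, norm_mul]
            rw [show ((mu:ℂ) + 3) * (2 * (lam:ℂ) + 1) + 24 * (del:ℂ)
                = (((mu + 3) * (2 * lam + 1) + 24 * del : ℝ) : ℂ) by push_cast; ring]
            rw [show ((mu:ℂ) - 1) * (2 * (lam:ℂ) + 1) = (((mu - 1) * (2 * lam + 1) : ℝ) : ℂ) by
              push_cast; ring]
            rw [habs _ (by nlinarith), habs _ (by nlinarith)]
            have h1 : (0:ℝ) ≤ (mu + 3) * (2 * lam + 1) + 24 * del := by nlinarith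
            have h2' : (0:ℝ) ≤ (mu - 1) * (2 * lam + 1) := by nlinarith
            gcongr
    have hq : (0:ℝ) ≤ (2 * lam + mu) / (2 * lam + 1) * del :=
      mul_nonneg (div_pos hA hl1).le hdel
    have hden : (0:ℝ) < 2 * lam + mu + 6 * ((2 * lam + mu) / (2 * lam + 1)) * del := by
      nlinarith
    have hgoal : 2 * (1 - beta) / (2 * lam + mu + 6 * ((2 * lam + mu) / (2 * lam + 1)) * del)
        = 2 * (1 - beta) * (2 * lam + 1) / ((2 * lam + mu) * (2 * lam + 1 + 6 * del)) := by
      rw [div_eq_div_iff hden.ne' (by positivity : (0:ℝ) < (2 * lam + mu) * (2 * lam + 1 + 6 * del)).ne']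
      field_simp
    rw [hgoal]
    calc ‖a₃‖ = (1 - beta) * (2 * lam + 1) * ‖W‖ / K := by
          rw [eq_div_iff hK.ne']; linarith [hKnorm]
      _ ≤ (1 - beta) * (2 * lam + 1)
            * (((mu + 3) * (2 * lam + 1) + 24 * del) * 2 + (mu - 1) * (2 * lam + 1) * 2) / K := by
          gcongr
      _ = 2 * (1 - beta) * (2 * lam + 1) / ((2 * lam + mu) * (2 * lam + 1 + 6 * del)) := by
          rw [div_eq_div_iff hK.ne' (by positivity : (0:ℝ) < (2 * lam + mu) * (2 * lam + 1 + 6 * del)).ne', hKdef]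
          ring
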